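/- For all natural numbers n and m, the space E_Δ(n,m) is homotopy equivalent to the set of monotone maps Fin(n+1) → Fin(m+1) endowed with the discrete topology; that is, there exists a homotopy equivalence of topological spaces between E_Δ(n,m) and the discrete space Mon([n],[m]). -/

import Mathlib

/-- The open unit interval. -/
abbrev IooSp : Type := ↥(Set.Ioo (0:ℝ) 1)

/-- The marked set `n̲ ⊆ (0,1)`, consisting of the points `(k+1)/(n+2)` for `0 ≤ k ≤ n`. -/
def markedDelta (n : ℕ) : Set IooSp :=
  {x | ∃ k : Fin (n + 1), (x : ℝ) = (((k : ℕ) : ℝ) + 1) / ((n : ℝ) + 2)}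

/-- The mapping space `Map_{Δ_Top}((I°,n̲),(I°,m̲))` of the topological simplex category:
monotone homotopy equivalences of the open interval preserving the marked points. -/
abbrev EDelta (n m : ℕ) : Type :=
  {f : C(IooSp, IooSp) //
    Monotone ⇑f ∧
    (∃ g : C(IooSp, IooSp),
      (g.comp f).Homotopic (ContinuousMap.id _) ∧
      (f.comp g).Homotopic (ContinuousMap.id _)) ∧
    ∀ x ∈ markedDelta n, f x ∈ markedDelta m}

namespace Stmt2Aux

noncomputable section

lemma combo_mem {a b t : ℝ} (ha : a ∈ Set.Ioo (0:ℝ) 1) (hb : b ∈ Set.Ioo (0:ℝ) 1)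
    (ht0 : 0 ≤ t) (ht1 : t ≤ 1) : (1 - t) * a + t * b ∈ Set.Ioo (0:ℝ) 1 := by
  have := convex_Ioo (0:ℝ) 1 ha hb (by linarith : (0:ℝ) ≤ 1 - t) ht0 (by ring)
  simpa using this

instance : LocallyCompactSpace IooSp := isOpen_Ioo.locallyCompactSpace

/-- Any two maps into the open interval are homotopic (straight-line homotopy). -/
lemma homotopic_line {X : Type*} [TopologicalSpace X] (f g : C(X, IooSp)) :
    f.Homotopic g := by
  have hf : Continuous fun p : unitInterval × X => ((f p.2 : ℝ)) :=
    continuous_subtype_val.comp (f.continuous.comp continuous_snd)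
  have hg : Continuous fun p : unitInterval × X => ((g p.2 : ℝ)) :=
    continuous_subtype_val.comp (g.continuous.comp continuous_snd)
  have ht : Continuous fun p : unitInterval × X => ((p.1 : ℝ)) :=
    continuous_subtype_val.comp continuous_fst
  refine ⟨⟨⟨fun p => ⟨(1 - (p.1:ℝ)) * (f p.2 : ℝ) + (p.1:ℝ) * (g p.2 : ℝ),
      combo_mem (f p.2).2 (g p.2).2 p.1.2.1 p.1.2.2⟩, ?_⟩, ?_, ?_⟩⟩
  · exact (((continuous_const.sub ht).mul hf).add (ht.mul hg)).subtype_mk _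
  · intro x; ext; simp
  · intro x; ext; simp

lemma htpyCond (f : C(IooSp, IooSp)) :
    ∃ g : C(IooSp, IooSp),
      (g.comp f).Homotopic (ContinuousMap.id _) ∧
      (f.comp g).Homotopic (ContinuousMap.id _) :=
  ⟨ContinuousMap.id _, homotopic_line _ _, homotopic_line _ _⟩

lemma pt_mem (n k : ℕ) (hk : k < n + 1) :
    ((k:ℝ) + 1) / ((n:ℝ) + 2) ∈ Set.Ioo (0:ℝ) 1 := by
  have hk' : (k:ℝ) < (n:ℝ) + 1 := by exact_mod_cast hk
  constructor
  · positivity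
  · rw [div_lt_one (by positivity)]; linarith

/-- The `k`-th marked point of `n̲`. -/
def pt (n : ℕ) (k : Fin (n+1)) : IooSp :=
  ⟨(((k:ℕ):ℝ) + 1) / ((n:ℝ) + 2), pt_mem n k k.2⟩

lemma pt_mem_marked (n : ℕ) (k : Fin (n+1)) : pt n k ∈ markedDelta n := ⟨k, rfl⟩

lemma val_inj {m : ℕ} {j j' : Fin (m+1)}
    (h : (((j:ℕ):ℝ) + 1) / ((m:ℝ) + 2) = (((j':ℕ):ℝ) + 1) / ((m:ℝ) + 2)) : j = j' := by
  have hm : ((m:ℝ) + 2) ≠ 0 := by positivity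
  field_simp at h
  exact Fin.ext (by exact_mod_cast (add_right_cancel h))

variable {n m : ℕ}

/-- The induced map on marked points. -/
def phi (f : EDelta n m) (k : Fin (n+1)) : Fin (m+1) :=
  (f.2.2.2 (pt n k) (pt_mem_marked n k)).choose

lemma phi_spec (f : EDelta n m) (k : Fin (n+1)) :
    ((f.1 (pt n k) : ℝ)) = (((phi f k : ℕ):ℝ) + 1) / ((m:ℝ) + 2) :=
  (f.2.2.2 (pt n k) (pt_mem_marked n k)).choose_spec

lemma pt_mono {k k' : Fin (n+1)} (h : k ≤ k') : pt n k ≤ pt n k' := by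
  rw [Subtype.mk_le_mk]
  have hkk : ((k:ℕ):ℝ) ≤ ((k':ℕ):ℝ) := by exact_mod_cast h
  exact div_le_div_of_nonneg_right (by linarith) (by positivity)

lemma phi_mono (f : EDelta n m) : Monotone (phi f) := by
  intro k k' h
  have h1 : f.1 (pt n k) ≤ f.1 (pt n k') := f.2.1 (pt_mono h)
  have h2 : ((f.1 (pt n k) : ℝ)) ≤ ((f.1 (pt n k') : ℝ)) := h1
  rw [phi_spec, phi_spec] at h2
  have hm : (0:ℝ) < (m:ℝ) + 2 := by positivity
  rw [div_le_div_iff_of_pos_right hm] at h2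
  have : ((phi f k : ℕ):ℝ) ≤ ((phi f k' : ℕ):ℝ) := by linarith
  exact_mod_cast this

/-! ### The piecewise linear section -/

/-- Clamp to `[0,1]`. -/
def ramp (t : ℝ) : ℝ := max 0 (min 1 t)

lemma ramp_continuous : Continuous ramp :=
  continuous_const.max (continuous_const.min continuous_id)

lemma ramp_monotone : Monotone ramp := fun a b h =>
  max_le_max le_rfl (min_le_min le_rfl h)

lemma ramp_nonneg (t : ℝ) : 0 ≤ ramp t := le_max_left _ _

lemma ramp_le_one (t : ℝ) : ramp t ≤ 1 := max_le zero_le_one (min_le_left _ _)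

lemma ramp_of_one_le {t : ℝ} (h : 1 ≤ t) : ramp t = 1 := by
  rw [ramp, min_eq_left h, max_eq_right zero_le_one]

lemma ramp_of_nonpos {t : ℝ} (h : t ≤ 0) : ramp t = 0 := by
  rw [ramp, min_eq_right (by linarith), max_eq_left h]

lemma ramp_pos {t : ℝ} (h : 0 < t) : 0 < ramp t :=
  lt_max_of_lt_right (lt_min one_pos h)

lemma ramp_lt_one {t : ℝ} (h : t < 1) : ramp t < 1 :=
  max_lt one_pos (min_lt_of_right_lt h)

/-- The target values: `yv φ 0 = 0`, `yv φ (k+1) = (φ k + 1)/(m+2)` for `k ≤ n`,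
and `yv φ j = 1` for `j ≥ n + 2`. -/
def yv (φ : Fin (n+1) → Fin (m+1)) (j : ℕ) : ℝ :=
  if h : 1 ≤ j ∧ j ≤ n + 1 then (((φ ⟨j - 1, by omega⟩ : ℕ):ℝ) + 1) / ((m:ℝ) + 2)
  else if j = 0 then 0 else 1

lemma yv_zero (φ : Fin (n+1) → Fin (m+1)) : yv φ 0 = 0 := by simp [yv]

lemma yv_succ (φ : Fin (n+1) → Fin (m+1)) (k : Fin (n+1)) :
    yv φ (k + 1) = (((φ k : ℕ):ℝ) + 1) / ((m:ℝ) + 2) := by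
  have h : 1 ≤ (k:ℕ) + 1 ∧ (k:ℕ) + 1 ≤ n + 1 := ⟨by omega, by omega⟩
  rw [yv, dif_pos h]
  congr 1

lemma yv_top (φ : Fin (n+1) → Fin (m+1)) : yv φ (n + 2) = 1 := by
  rw [yv, dif_neg (by omega), if_neg (by omega)]

lemma yv_nonneg (φ : Fin (n+1) → Fin (m+1)) (j : ℕ) : 0 ≤ yv φ j := by
  rw [yv]
  split
  · positivity
  · split <;> norm_num

lemma yv_le_one (φ : Fin (n+1) → Fin (m+1)) (j : ℕ) : yv φ j ≤ 1 := by
  rw [yv]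
  split
  · rw [div_le_one (by positivity)]
    have : ((φ ⟨j - 1, by omega⟩ : ℕ):ℝ) ≤ (m:ℝ) := by
      exact_mod_cast Nat.lt_succ_iff.mp (φ _).2
    linarith
  · split <;> norm_num

lemma yv_mono {φ : Fin (n+1) → Fin (m+1)} (hφ : Monotone φ) : Monotone (yv φ) := by
  apply monotone_nat_of_le_succ
  intro j
  rcases Nat.eq_zero_or_pos j with h0 | hpos
  · subst h0; rw [yv_zero]; exact yv_nonneg φ 1
  rcases le_or_gt (j + 1) (n + 1) with hle | hgt
  · have h1 : 1 ≤ j ∧ j ≤ n + 1 := ⟨hpos, by omega⟩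
    have h2 : 1 ≤ j + 1 ∧ j + 1 ≤ n + 1 := ⟨by omega, hle⟩
    rw [yv, dif_pos h1, yv, dif_pos h2]
    have hmono : φ ⟨j - 1, by omega⟩ ≤ φ ⟨j + 1 - 1, by omega⟩ := hφ (by simp only [Fin.mk_le_mk]; omega)
    have : ((φ ⟨j - 1, by omega⟩ : ℕ):ℝ) ≤ ((φ ⟨j + 1 - 1, by omega⟩ : ℕ):ℝ) := by
      exact_mod_cast hmono
    exact div_le_div_of_nonneg_right (by linarith) (by positivity)
  · have : yv φ (j + 1) = 1 := by rw [yv, dif_neg (by omega), if_neg (by omega)]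
    rw [this]; exact yv_le_one φ j

/-- The piecewise linear interpolation, as a function on `ℝ`. -/
def S (φ : Fin (n+1) → Fin (m+1)) (x : ℝ) : ℝ :=
  ∑ j ∈ Finset.range (n + 2), (yv φ (j + 1) - yv φ j) * ramp (((n:ℝ) + 2) * x - j)

lemma S_continuous (φ : Fin (n+1) → Fin (m+1)) : Continuous (S φ) := by
  apply continuous_finset_sum
  intro j _
  exact continuous_const.mul
    (ramp_continuous.comp ((continuous_const.mul continuous_id).sub continuous_const))

lemma S_monotone {φ : Fin (n+1) → Fin (m+1)} (hφ : Monotone φ) : Monotone (S φ) := by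
  intro a b hab
  apply Finset.sum_le_sum
  intro j _
  have hc : 0 ≤ yv φ (j + 1) - yv φ j := sub_nonneg.2 (yv_mono hφ (Nat.le_succ j))
  apply mul_le_mul_of_nonneg_left _ hc
  apply ramp_monotone
  have : ((n:ℝ) + 2) * a ≤ ((n:ℝ) + 2) * b := by
    apply mul_le_mul_of_nonneg_left hab (by positivity)
  linarith

lemma S_telescope (φ : Fin (n+1) → Fin (m+1)) (k : ℕ) :
    ∑ j ∈ Finset.range k, (yv φ (j + 1) - yv φ j) = yv φ k - yv φ 0 :=
  Finset.sum_range_sub (yv φ) k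

lemma S_mem {φ : Fin (n+1) → Fin (m+1)} (hφ : Monotone φ) {x : ℝ}
    (hx : x ∈ Set.Ioo (0:ℝ) 1) : S φ x ∈ Set.Ioo (0:ℝ) 1 := by
  obtain ⟨hx0, hx1⟩ := hx
  constructor
  · apply Finset.sum_pos'
    · intro j _
      exact mul_nonneg (sub_nonneg.2 (yv_mono hφ (Nat.le_succ j))) (ramp_nonneg _)
    · refine ⟨0, Finset.mem_range.2 (by omega), ?_⟩
      apply mul_pos
      · rw [yv_zero, sub_zero]
        have h1 : yv φ (0 + 1) = (((φ 0 : ℕ):ℝ) + 1) / ((m:ℝ) + 2) := by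
          simpa using yv_succ φ 0
        rw [h1]; positivity
      · apply ramp_pos
        push_cast
        nlinarith
  · have hlt : S φ x < ∑ j ∈ Finset.range (n + 2), (yv φ (j + 1) - yv φ j) := by
      apply Finset.sum_lt_sum
      · intro j _
        have hc : 0 ≤ yv φ (j + 1) - yv φ j := sub_nonneg.2 (yv_mono hφ (Nat.le_succ j))
        calc (yv φ (j + 1) - yv φ j) * ramp (((n:ℝ) + 2) * x - j)
            ≤ (yv φ (j + 1) - yv φ j) * 1 :=
              mul_le_mul_of_nonneg_left (ramp_le_one _) hc
          _ = yv φ (j + 1) - yv φ j := mul_one _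
      · refine ⟨n + 1, Finset.mem_range.2 (by omega), ?_⟩
        have hc : 0 < yv φ (n + 1 + 1) - yv φ (n + 1) := by
          have h2 : yv φ (n + 1 + 1) = 1 := yv_top φ
          have h3 : yv φ (n + 1) < 1 := by
            rw [yv, dif_pos (⟨by omega, by omega⟩ : 1 ≤ n + 1 ∧ n + 1 ≤ n + 1),
              div_lt_one (by positivity)]
            have : ((φ ⟨n + 1 - 1, by omega⟩ : ℕ):ℝ) ≤ (m:ℝ) := by
              exact_mod_cast Nat.lt_succ_iff.mp (φ _).2
            linarith
          rw [h2]; linarith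
        have hr : ramp (((n:ℝ) + 2) * x - ((n + 1 : ℕ):ℝ)) < 1 := by
          apply ramp_lt_one
          push_cast
          nlinarith
        have hb := mul_lt_mul_of_pos_left hr hc
        rw [mul_one] at hb
        exact hb
    calc S φ x < _ := hlt
      _ = yv φ (n + 2) - yv φ 0 := S_telescope φ (n + 2)
      _ = 1 := by rw [yv_top, yv_zero]; ring

lemma S_at_pt (φ : Fin (n+1) → Fin (m+1)) (k : Fin (n+1)) :
    S φ ((((k:ℕ):ℝ) + 1) / ((n:ℝ) + 2)) = (((φ k : ℕ):ℝ) + 1) / ((m:ℝ) + 2) := by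
  have hn : ((n:ℝ) + 2) ≠ 0 := by positivity
  have harg : ∀ j : ℕ, ((n:ℝ) + 2) * ((((k:ℕ):ℝ) + 1) / ((n:ℝ) + 2)) - j
      = (((k:ℕ):ℝ) + 1) - j := by
    intro j; rw [mul_div_cancel₀ _ hn]
  rw [S]
  have hsum : ∑ j ∈ Finset.range (n + 2), (yv φ (j + 1) - yv φ j) *
      ramp (((n:ℝ) + 2) * ((((k:ℕ):ℝ) + 1) / ((n:ℝ) + 2)) - j)
      = ∑ j ∈ Finset.range ((k:ℕ) + 1), (yv φ (j + 1) - yv φ j) := by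
    rw [← Finset.sum_subset (Finset.range_subset_range.2 (by omega : (k:ℕ) + 1 ≤ n + 2))]
    · apply Finset.sum_congr rfl
      intro j hj
      have hj' : j ≤ (k:ℕ) := by
        have := Finset.mem_range.1 hj; omega
      rw [harg j, ramp_of_one_le, mul_one]
      have : (j:ℝ) ≤ ((k:ℕ):ℝ) := by exact_mod_cast hj'
      linarith
    · intro j _ hj
      have hj' : (k:ℕ) + 1 ≤ j := by
        by_contra hcon
        exact hj (Finset.mem_range.2 (by omega))
      rw [harg j, ramp_of_nonpos, mul_zero]
      have : ((k:ℕ):ℝ) + 1 ≤ (j:ℝ) := by exact_mod_cast hj'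
      linarith
  rw [hsum, S_telescope, yv_zero, sub_zero, yv_succ]

/-! ### The section as a continuous map on the interval -/

/-- The piecewise linear section, as a continuous self-map of the open interval. -/
def secC (φ : Fin (n+1) → Fin (m+1)) (hφ : Monotone φ) : C(IooSp, IooSp) :=
  ⟨fun x => ⟨S φ (x : ℝ), S_mem hφ x.2⟩,
    ((S_continuous φ).comp continuous_subtype_val).subtype_mk _⟩

lemma secC_mono (φ : Fin (n+1) → Fin (m+1)) (hφ : Monotone φ) : Monotone ⇑(secC φ hφ) := by
  intro x y hxy
  exact Subtype.mk_le_mk.2 (S_monotone hφ hxy)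

lemma secC_marked (φ : Fin (n+1) → Fin (m+1)) (hφ : Monotone φ) :
    ∀ x ∈ markedDelta n, secC φ hφ x ∈ markedDelta m := by
  rintro x ⟨k, hk⟩
  refine ⟨φ k, ?_⟩
  show S φ (x : ℝ) = _
  rw [hk]
  exact S_at_pt φ k

/-- The piecewise linear section, as an element of `EDelta n m`. -/
def secE (φ : Fin (n+1) → Fin (m+1)) (hφ : Monotone φ) : EDelta n m :=
  ⟨secC φ hφ, secC_mono φ hφ, htpyCond _, secC_marked φ hφ⟩

lemma phi_secE (φ : Fin (n+1) → Fin (m+1)) (hφ : Monotone φ) :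
    phi (secE φ hφ) = φ := by
  funext k
  apply val_inj (m := m)
  rw [← phi_spec (secE φ hφ) k]
  show S φ _ = _
  exact S_at_pt φ k

lemma secE_at_pt (f : EDelta n m) (k : Fin (n+1)) :
    (secE (phi f) (phi_mono f)).1 (pt n k) = f.1 (pt n k) := by
  apply Subtype.ext
  show S (phi f) ((pt n k : ℝ)) = _
  rw [show ((pt n k : IooSp) : ℝ) = (((k:ℕ):ℝ) + 1) / ((n:ℝ) + 2) from rfl, S_at_pt]
  exact (phi_spec f k).symm

/-! ### The projection is locally constant -/

lemma marked_close {j j' : Fin (m+1)}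
    (h : |(((j:ℕ):ℝ) + 1) / ((m:ℝ) + 2) - (((j':ℕ):ℝ) + 1) / ((m:ℝ) + 2)| < 1 / ((m:ℝ) + 2)) :
    j = j' := by
  by_contra hne
  have hm : (0:ℝ) < (m:ℝ) + 2 := by positivity
  have hint : (1:ℝ) ≤ |((j:ℕ):ℝ) - ((j':ℕ):ℝ)| := by
    have : (j:ℕ) ≠ (j':ℕ) := fun hc => hne (Fin.ext hc)
    rcases this.lt_or_gt with hlt | hlt
    · have h1 : ((j:ℕ):ℝ) + 1 ≤ ((j':ℕ):ℝ) := by exact_mod_cast hlt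
      rw [abs_sub_comm, abs_of_nonneg (by linarith)]
      linarith
    · have h1 : ((j':ℕ):ℝ) + 1 ≤ ((j:ℕ):ℝ) := by exact_mod_cast hlt
      rw [abs_of_nonneg (by linarith)]
      linarith
  have heq : (((j:ℕ):ℝ) + 1) / ((m:ℝ) + 2) - (((j':ℕ):ℝ) + 1) / ((m:ℝ) + 2)
      = (((j:ℕ):ℝ) - ((j':ℕ):ℝ)) / ((m:ℝ) + 2) := by ring
  rw [heq, abs_div, abs_of_pos hm, div_lt_div_iff_of_pos_right hm] at h
  linarith

variable (n m) in
/-- The discrete space of monotone maps. -/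
abbrev MonSp : Type := {φ : Fin (n + 1) → Fin (m + 1) // Monotone φ}

instance : TopologicalSpace (MonSp n m) := ⊥
instance : DiscreteTopology (MonSp n m) := ⟨rfl⟩

/-- The projection to the discrete space of monotone maps. -/
def Phi (f : EDelta n m) : MonSp n m := ⟨phi f, phi_mono f⟩

lemma ev_continuous (k : Fin (n+1)) :
    Continuous fun f : EDelta n m => ((f.1 (pt n k) : ℝ)) :=
  continuous_subtype_val.comp
    ((continuous_eval_const (pt n k)).comp continuous_subtype_val)

lemma Phi_continuous : Continuous (Phi : EDelta n m → MonSp n m) := by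
  rw [← IsLocallyConstant.iff_continuous]
  rw [IsLocallyConstant.iff_exists_open]
  intro f
  refine ⟨⋂ k : Fin (n+1),
      {g : EDelta n m | |((g.1 (pt n k) : ℝ)) - ((f.1 (pt n k) : ℝ))| < 1 / ((m:ℝ) + 2)},
      ?_, ?_, ?_⟩
  · apply isOpen_iInter_of_finite
    intro k
    have hc : Continuous fun g : EDelta n m =>
        |((g.1 (pt n k) : ℝ)) - ((f.1 (pt n k) : ℝ))| :=
      ((ev_continuous k).sub continuous_const).abs
    exact isOpen_lt hc continuous_const
  · simp only [Set.mem_iInter, Set.mem_setOf_eq]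
    intro k
    simp only [sub_self, abs_zero]
    positivity
  · intro g hg
    simp only [Set.mem_iInter, Set.mem_setOf_eq] at hg
    apply Subtype.ext
    funext k
    show phi g k = phi f k
    apply marked_close (m := m)
    rw [← phi_spec g k, ← phi_spec f k]
    exact hg k

/-! ### The homotopy equivalence -/

/-- The convex-combination deformation. -/
def mixC (t : unitInterval) (f : EDelta n m) : C(IooSp, IooSp) :=
  ⟨fun x => ⟨(1 - (t:ℝ)) * ((secC (phi f) (phi_mono f) x : ℝ)) + (t:ℝ) * ((f.1 x : ℝ)),
      combo_mem (secC (phi f) (phi_mono f) x).2 (f.1 x).2 t.2.1 t.2.2⟩,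
    by
      have h1 : Continuous fun x : IooSp => ((secC (phi f) (phi_mono f) x : ℝ)) :=
        continuous_subtype_val.comp (secC (phi f) (phi_mono f)).continuous
      have h2 : Continuous fun x : IooSp => ((f.1 x : ℝ)) :=
        continuous_subtype_val.comp f.1.continuous
      exact ((continuous_const.mul h1).add (continuous_const.mul h2)).subtype_mk _⟩

lemma mixC_mono (t : unitInterval) (f : EDelta n m) : Monotone ⇑(mixC t f) := by
  intro x y hxy
  apply Subtype.mk_le_mk.2
  have hs : S (phi f) ((x:ℝ)) ≤ S (phi f) ((y:ℝ)) := S_monotone (phi_mono f) hxy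
  have hf : ((f.1 x : ℝ)) ≤ ((f.1 y : ℝ)) := f.2.1 hxy
  have ht0 : (0:ℝ) ≤ (t:ℝ) := t.2.1
  have ht1 : (t:ℝ) ≤ 1 := t.2.2
  have := mul_le_mul_of_nonneg_left hs (by linarith : (0:ℝ) ≤ 1 - (t:ℝ))
  have := mul_le_mul_of_nonneg_left hf ht0
  show (1 - (t:ℝ)) * S (phi f) ((x:ℝ)) + (t:ℝ) * ((f.1 x : ℝ)) ≤
    (1 - (t:ℝ)) * S (phi f) ((y:ℝ)) + (t:ℝ) * ((f.1 y : ℝ))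
  linarith

lemma mixC_marked (t : unitInterval) (f : EDelta n m) :
    ∀ x ∈ markedDelta n, mixC t f x ∈ markedDelta m := by
  rintro x ⟨k, hk⟩
  have hx : x = pt n k := Subtype.ext hk
  subst hx
  refine ⟨phi f k, ?_⟩
  show (1 - (t:ℝ)) * ((secC (phi f) (phi_mono f) (pt n k) : ℝ)) + (t:ℝ) * ((f.1 (pt n k) : ℝ)) = _
  have h1 : ((secC (phi f) (phi_mono f) (pt n k) : ℝ)) =
      (((phi f k : ℕ):ℝ) + 1) / ((m:ℝ) + 2) := S_at_pt (phi f) k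
  rw [h1, phi_spec f k]
  ring

/-- The deformation, landing in `EDelta n m`. -/
def mixE (t : unitInterval) (f : EDelta n m) : EDelta n m :=
  ⟨mixC t f, mixC_mono t f, htpyCond _, mixC_marked t f⟩

lemma mix_continuous :
    Continuous fun p : unitInterval × EDelta n m => mixE p.1 p.2 := by
  apply Continuous.subtype_mk
  apply ContinuousMap.continuous_of_continuous_uncurry
  show Continuous fun q : (unitInterval × EDelta n m) × IooSp => (mixC q.1.1 q.1.2) q.2
  apply Continuous.subtype_mk
  show Continuous fun q : (unitInterval × EDelta n m) × IooSp =>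
    (1 - ((q.1.1 : ℝ))) * ((secC (phi q.1.2) (phi_mono q.1.2) q.2 : ℝ))
      + ((q.1.1 : ℝ)) * ((q.1.2.1 q.2 : ℝ))
  have ht : Continuous fun q : (unitInterval × EDelta n m) × IooSp => ((q.1.1 : ℝ)) :=
    continuous_subtype_val.comp (continuous_fst.comp continuous_fst)
  have hsecmap : Continuous fun f : EDelta n m => secC (phi f) (phi_mono f) := by
    have : (fun f : EDelta n m => secC (phi f) (phi_mono f))
        = (fun φ : MonSp n m => secC φ.1 φ.2) ∘ Phi := rfl
    rw [this]
    exact Continuous.comp continuous_bot Phi_continuous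
  have hev : Continuous fun p : C(IooSp, IooSp) × IooSp => p.1 p.2 :=
    continuous_eval
  have hsec : Continuous fun q : (unitInterval × EDelta n m) × IooSp =>
      ((secC (phi q.1.2) (phi_mono q.1.2) q.2 : ℝ)) := by
    apply continuous_subtype_val.comp
    exact hev.comp ((hsecmap.comp (continuous_snd.comp continuous_fst)).prodMk continuous_snd)
  have hf : Continuous fun q : (unitInterval × EDelta n m) × IooSp => ((q.1.2.1 q.2 : ℝ)) := by
    apply continuous_subtype_val.comp
    exact hev.comp (((continuous_subtype_val.comp (continuous_snd.comp continuous_fst))).prodMk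
      continuous_snd)
  exact ((continuous_const.sub ht).mul hsec).add (ht.mul hf)

variable (n m) in
/-- The homotopy equivalence between `EDelta n m` and the discrete space of monotone maps. -/
def mainEquiv : ContinuousMap.HomotopyEquiv (EDelta n m) (MonSp n m) where
  toFun := ⟨Phi, Phi_continuous⟩
  invFun := ⟨fun φ => secE φ.1 φ.2, continuous_bot⟩
  left_inv := by
    refine ⟨⟨⟨fun p => mixE p.1 p.2, mix_continuous⟩, ?_, ?_⟩⟩
    · intro f
      apply Subtype.ext
      apply ContinuousMap.ext
      intro x
      apply Subtype.ext
      show (1 - ((0:unitInterval):ℝ)) * _ + ((0:unitInterval):ℝ) * _ = _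
      norm_num
      rfl
    · intro f
      apply Subtype.ext
      apply ContinuousMap.ext
      intro x
      apply Subtype.ext
      show (1 - ((1:unitInterval):ℝ)) * _ + ((1:unitInterval):ℝ) * _ = _
      norm_num
  right_inv := by
    have : (ContinuousMap.mk (Phi : EDelta n m → MonSp n m) Phi_continuous).comp
        ⟨fun φ : MonSp n m => secE φ.1 φ.2, continuous_bot⟩ = ContinuousMap.id _ := by
      apply ContinuousMap.ext
      intro φ
      apply Subtype.ext
      exact phi_secE φ.1 φ.2
    rw [this]

end
end Stmt2Aux

/-- `Map_{Δ_Top}((I°,n̲),(I°,m̲))` is homotopy equivalent to the discrete space of monotone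
maps `[n] → [m]`. -/
theorem stmt_2 (n m : ℕ) :
    letI : TopologicalSpace {φ : Fin (n + 1) → Fin (m + 1) // Monotone φ} := ⊥
    Nonempty
      (ContinuousMap.HomotopyEquiv (EDelta n m)
        {φ : Fin (n + 1) → Fin (m + 1) // Monotone φ}) := by
  exact ⟨Stmt2Aux.mainEquiv n m⟩
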